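/- Let K be a positive semidefinite bounded linear operator on H and let (F,G) be an (N,n) K-dual pair such that ‖f_i‖·‖g_i‖ = tr(K)/N for every i ∈ {1,…,N}. Then ⟨f_i, g_i⟩ = tr(K)/N for every i ∈ {1,…,N} (in particular each ⟨f_i, g_i⟩ is a nonnegative real number). -/

import Mathlib

open scoped ComplexOrder

local notation "⟪" x ", " y "⟫" => @inner ℂ _ _ x y

lemma trace_eq_sum_inner' {H : Type*} [NormedAddCommGroup H] [InnerProductSpace ℂ H]
    [FiniteDimensional ℂ H] (K : H →L[ℂ] H) (b : OrthonormalBasis (Fin (Module.finrank ℂ H)) ℂ H) :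
    LinearMap.trace ℂ H (K : H →ₗ[ℂ] H) = ∑ j, ⟪b j, K (b j)⟫ := by
  rw [LinearMap.trace_eq_matrix_trace ℂ b.toBasis, Matrix.trace]
  congr 1
  ext j
  rw [Matrix.diag_apply, LinearMap.toMatrix_apply]
  simp [OrthonormalBasis.coe_toBasis, OrthonormalBasis.repr_apply_apply]

theorem stmt3
    {H : Type*} [NormedAddCommGroup H] [InnerProductSpace ℂ H] [FiniteDimensional ℂ H]
    (hdim : 1 ≤ Module.finrank ℂ H)
    {N : ℕ} (hN : 1 ≤ N)
    (K : H →L[ℂ] H) (hK : ∀ f : H, 0 ≤ ⟪K f, f⟫)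
    (F G : Fin N → H)
    (hdual : ∀ f : H, K f = ∑ i, ⟪G i, f⟫ • F i)
    (hnorm : ∀ i, ‖F i‖ * ‖G i‖ = (LinearMap.trace ℂ H (K : H →ₗ[ℂ] H)).re / N) :
    ∀ i, ⟪G i, F i⟫ = LinearMap.trace ℂ H (K : H →ₗ[ℂ] H) / N := by
  set T : ℂ := LinearMap.trace ℂ H (K : H →ₗ[ℂ] H) with hT
  obtain b := stdOrthonormalBasis ℂ H
  have h1 := trace_eq_sum_inner' K b
  rw [← hT] at h1
  -- trace = ∑_i ⟪G i, F i⟫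
  have htr : T = ∑ i, ⟪G i, F i⟫ := by
    rw [h1]
    have heach : ∀ j, ⟪b j, K (b j)⟫ = ∑ i, ⟪G i, b j⟫ * ⟪b j, F i⟫ := by
      intro j
      rw [hdual (b j)]
      simp [inner_sum, inner_smul_right]
    simp_rw [heach]
    rw [Finset.sum_comm]
    exact Finset.sum_congr rfl fun i _ => b.sum_inner_mul_inner (G i) (F i)
  -- trace is real
  have hTim : T.im = 0 := by
    rw [h1, Complex.im_sum]
    apply Finset.sum_eq_zero
    intro j _
    have h := hK (b j)
    rw [Complex.le_def] at h
    have e : ⟪b j, K (b j)⟫ = (starRingEnd ℂ) ⟪K (b j), b j⟫ :=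
      (inner_conj_symm (b j) (K (b j))).symm
    rw [e, Complex.conj_im, ← h.2]
    simp
  set t : ℝ := T.re / N with ht
  -- each inner product has modulus ≤ t
  have habs : ∀ i, ‖⟪G i, F i⟫‖ ≤ t := by
    intro i
    calc ‖⟪G i, F i⟫‖ = ‖⟪G i, F i⟫‖ := rfl
      _ ≤ ‖G i‖ * ‖F i‖ := norm_inner_le_norm _ _
      _ = t := by rw [mul_comm]; exact hnorm i
  -- real parts sum to N * t and each ≤ t, hence each = t
  have hre : ∀ i, (⟪G i, F i⟫ : ℂ).re = t := by
    have hsum : ∑ i, (t - (⟪G i, F i⟫ : ℂ).re) = 0 := by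
      rw [Finset.sum_sub_distrib, Finset.sum_const, Finset.card_univ, Fintype.card_fin,
        nsmul_eq_mul]
      have : (∑ i, (⟪G i, F i⟫ : ℂ).re) = T.re := by
        rw [htr, Complex.re_sum]
      rw [this, ht]
      field_simp
      ring
    intro i
    have hnn : ∀ j ∈ Finset.univ, 0 ≤ t - (⟪G j, F j⟫ : ℂ).re := by
      intro j _
      have := (Complex.re_le_norm ⟪G j, F j⟫).trans (habs j)
      linarith
    have := (Finset.sum_eq_zero_iff_of_nonneg hnn).mp hsum i (Finset.mem_univ i)
    linarith
  intro i
  -- imaginary part is zero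
  have him : (⟪G i, F i⟫ : ℂ).im = 0 := by
    have h2 : ‖⟪G i, F i⟫‖ ^ 2 ≤ t ^ 2 := by
      have h0 : (0:ℝ) ≤ ‖⟪G i, F i⟫‖ := norm_nonneg _
      nlinarith [habs i]
    rw [Complex.sq_norm, Complex.normSq_apply, hre i] at h2
    nlinarith [sq_nonneg ((⟪G i, F i⟫ : ℂ).im)]
  have hz : ⟪G i, F i⟫ = (t : ℂ) := Complex.ext (by simp [hre i]) (by simp [him])
  have hTre : T = (T.re : ℂ) := Complex.ext rfl (by simp [hTim])
  rw [hz, hTre, ht]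
  push_cast
  ring
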